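/- Let u, s ∈ S^{m−1} ⊂ ℝ^m with ⟨u,s⟩ = 0, τ = u + is, τ† = −u + is, and f_{τ,k,ℓ}(z) = ⟨z,τ⟩^k⟨z,τ†⟩^ℓ. Then for all k, ℓ ∈ ℕ: ∫_{S^{m−1}} ∫_0^π conj(f_{τ,k,ℓ}(e^{iθ}ω)) · f_{τ,k,ℓ}(e^{iθ}ω) dθ dS(ω) = 2π^{m/2+1} Γ(k+ℓ+1)/Γ(k+ℓ+m/2). -/

import Mathlib

noncomputable section

open MeasureTheory Metric

/-- The bilinear pairing `⟨u,v⟩ = ∑_j u_j v_j` on `ℂ^m`. -/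
def pairC {m : ℕ} (u v : Fin m → ℂ) : ℂ := ∑ j, u j * v j

/-- `ℝ^m` with its Euclidean structure. -/
abbrev V (m : ℕ) := EuclideanSpace ℝ (Fin m)

/-- The real bilinear pairing `⟨x,y⟩ = ∑_j x_j y_j` on `ℝ^m`. -/
def pairR {m : ℕ} (x y : V m) : ℝ := ∑ j, x j * y j

/-- `τ = u + i s ∈ ℂ^m`, for real vectors `u, s`. -/
def tauP {m : ℕ} (u s : V m) : Fin m → ℂ := fun j => (u j : ℂ) + (s j : ℂ) * Complex.I

/-- `τ† = -u + i s ∈ ℂ^m`, for real vectors `u, s`. -/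
def tauM {m : ℕ} (u s : V m) : Fin m → ℂ := fun j => -(u j : ℂ) + (s j : ℂ) * Complex.I

/-- `e^{iθ} ω ∈ ℂ^m`, a point of the Lie sphere (for `ω ∈ S^{m-1}`). -/
def lvec {m : ℕ} (θ : ℝ) (ω : V m) : Fin m → ℂ :=
  fun j => Complex.exp (θ * Complex.I) * (ω j : ℂ)

/-- The surface measure `dS` on the unit sphere `S^{m-1} ⊂ ℝ^m`
(the total mass of this measure is the surface area `A_m`). -/
abbrev sphMeasure (m : ℕ) : Measure (sphere (0 : V m) 1) := (volume : Measure (V m)).toSphere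

section Aux
open Set
lemma pairC_tauP {m : ℕ} (u s : V m) (θ : ℝ) (ω : V m) :
    pairC (lvec θ ω) (tauP u s)
      = Complex.exp (θ * Complex.I) * ((pairR ω u : ℂ) + (pairR ω s : ℂ) * Complex.I) := by
  simp only [pairC, lvec, tauP, pairR]
  push_cast
  rw [mul_add, Finset.mul_sum, ← mul_assoc, Finset.mul_sum, Finset.sum_mul,
    ← Finset.sum_add_distrib]
  exact Finset.sum_congr rfl fun j _ => by ring

lemma pairC_tauM {m : ℕ} (u s : V m) (θ : ℝ) (ω : V m) :
    pairC (lvec θ ω) (tauM u s)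
      = Complex.exp (θ * Complex.I) * (-(pairR ω u : ℂ) + (pairR ω s : ℂ) * Complex.I) := by
  simp only [pairC, lvec, tauM, pairR]
  push_cast
  rw [mul_add, mul_neg, Finset.mul_sum, ← Finset.sum_neg_distrib, ← mul_assoc,
    Finset.mul_sum, Finset.sum_mul, ← Finset.sum_add_distrib]
  exact Finset.sum_congr rfl fun j _ => by ring

lemma conj_mul_self_eq {m : ℕ} (u s : V m) (θ : ℝ) (ω : V m) (k l : ℕ) :
    (starRingEnd ℂ)
        (pairC (lvec θ ω) (tauP u s) ^ k * pairC (lvec θ ω) (tauM u s) ^ l) *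
      (pairC (lvec θ ω) (tauP u s) ^ k * pairC (lvec θ ω) (tauM u s) ^ l)
    = (((pairR ω u ^ 2 + pairR ω s ^ 2) ^ (k + l) : ℝ) : ℂ) := by
  set w := pairC (lvec θ ω) (tauP u s) ^ k * pairC (lvec θ ω) (tauM u s) ^ l with hw
  rw [Complex.normSq_eq_conj_mul_self.symm]
  rw [hw, map_mul, map_pow, map_pow, pairC_tauP, pairC_tauM]
  have h1 : Complex.normSq (Complex.exp (θ * Complex.I)) = 1 := by
    rw [Complex.normSq_eq_norm_sq, Complex.norm_exp_ofReal_mul_I]; norm_num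
  have h2 : Complex.normSq ((pairR ω u : ℂ) + (pairR ω s : ℂ) * Complex.I)
      = pairR ω u ^ 2 + pairR ω s ^ 2 := by
    rw [Complex.normSq_add_mul_I]
  have h3 : Complex.normSq (-(pairR ω u : ℂ) + (pairR ω s : ℂ) * Complex.I)
      = pairR ω u ^ 2 + pairR ω s ^ 2 := by
    rw [show -((pairR ω u : ℝ) : ℂ) = ((-pairR ω u : ℝ) : ℂ) by push_cast; ring,
      Complex.normSq_add_mul_I]
    ring
  rw [map_mul, map_mul, h1, h2, h3]
  push_cast
  ring

lemma integral_volumeIoiPow (N : ℕ) (f : ℝ → ℝ) :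
    ∫ r : Ioi (0:ℝ), f r ∂(Measure.volumeIoiPow N) = ∫ r in Ioi (0:ℝ), r ^ N * f r := by
  simp only [Measure.volumeIoiPow, ENNReal.ofReal]
  rw [integral_withDensity_eq_integral_smul
      ((measurable_subtype_coe.pow_const _).real_toNNReal),
    integral_subtype_comap measurableSet_Ioi fun a => Real.toNNReal (a ^ N) • f a,
    setIntegral_congr_fun measurableSet_Ioi fun x hx => ?_]
  rw [NNReal.smul_def, Real.coe_toNNReal _ (pow_nonneg (le_of_lt hx) _), smul_eq_mul]

lemma moment (M : ℕ) :
    ∫ r in Ioi (0:ℝ), r ^ M * Real.exp (-r ^ 2) = (1/2) * Real.Gamma ((M + 1) / 2) := by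
  have h := integral_rpow_mul_exp_neg_rpow (p := 2) (q := M) two_pos
    (by exact_mod_cast neg_one_lt_zero.trans_le (Nat.cast_nonneg M))
  rw [← h]
  · rw [setIntegral_congr_fun measurableSet_Ioi fun x hx => ?_]
    rw [← Real.rpow_natCast x M, ← Real.rpow_natCast x 2]
    norm_num

lemma pairR_smul {m : ℕ} (c : ℝ) (x y : V m) : pairR (c • x) y = c * pairR x y := by
  simp only [pairR, PiLp.smul_apply, smul_eq_mul, Finset.mul_sum]
  exact Finset.sum_congr rfl fun j _ => by ring

lemma polar_eq {m : ℕ} (hm : 3 ≤ m) (u s : V m) (n : ℕ) :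
    ∫ x : V m, (pairR x u ^ 2 + pairR x s ^ 2) ^ n * Real.exp (-‖x‖ ^ 2)
      = (∫ ω : sphere (0 : V m) 1, (pairR (ω : V m) u ^ 2 + pairR (ω : V m) s ^ 2) ^ n
          ∂((volume : Measure (V m)).toSphere))
        * ((1/2) * Real.Gamma (n + m / 2)) := by
  have hdim : Module.finrank ℝ (V m) = m := finrank_euclideanSpace_fin
  haveI : Nontrivial (V m) := by
    exact Module.nontrivial_of_finrank_pos (R := ℝ) (by rw [hdim]; omega)
  set g : sphere (0 : V m) 1 → ℝ :=
    fun ω => (pairR (ω : V m) u ^ 2 + pairR (ω : V m) s ^ 2) ^ n with hg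
  set h : ℝ → ℝ := fun r => r ^ (2*n) * Real.exp (-r ^ 2) with hh
  have key : ∫ x : V m, (pairR x u ^ 2 + pairR x s ^ 2) ^ n * Real.exp (-‖x‖ ^ 2)
      = ∫ p : sphere (0 : V m) 1 × Ioi (0:ℝ), g p.1 * h (p.2 : ℝ)
        ∂((volume : Measure (V m)).toSphere.prod (Measure.volumeIoiPow (m-1))) := by
    have hmp := Measure.measurePreserving_homeomorphUnitSphereProd (volume : Measure (V m))
    rw [hdim] at hmp
    rw [show ∫ x : V m, (pairR x u ^ 2 + pairR x s ^ 2) ^ n * Real.exp (-‖x‖ ^ 2)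
        = ∫ x : ({(0 : V m)}ᶜ : Set (V m)),
            (pairR (x : V m) u ^ 2 + pairR (x : V m) s ^ 2) ^ n * Real.exp (-‖(x : V m)‖ ^ 2)
            ∂(Measure.comap Subtype.val volume) by
      rw [integral_subtype_comap (measurableSet_singleton (0 : V m)).compl
          (fun y : V m => (pairR y u ^ 2 + pairR y s ^ 2) ^ n * Real.exp (-‖y‖ ^ 2)),
        restrict_compl_singleton]]
    rw [← hmp.integral_comp (Homeomorph.measurableEmbedding _)
        (fun q : sphere (0 : V m) 1 × Ioi (0:ℝ) => g q.1 * h (q.2 : ℝ))]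
    refine integral_congr_ae (Filter.Eventually.of_forall fun x => ?_)
    · show _ = g _ * h _
      simp only [g, h, homeomorphUnitSphereProd_apply_fst_coe,
        homeomorphUnitSphereProd_apply_snd_coe, pairR_smul]
      set c := ‖(x : V m)‖ with hc
      have hx' : c ≠ 0 := norm_ne_zero_iff.2 x.2
      set a := pairR (x : V m) u
      set b := pairR (x : V m) s
      rw [show (c⁻¹ * a) ^ 2 + (c⁻¹ * b) ^ 2 = c⁻¹ ^ 2 * (a ^ 2 + b ^ 2) by ring]
      rw [mul_pow (c⁻¹ ^ 2), ← pow_mul c⁻¹ 2 n]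
      rw [show c⁻¹ ^ (2*n) * (a ^ 2 + b ^ 2) ^ n * (c ^ (2*n) * Real.exp (-c ^ 2))
          = (c⁻¹ * c) ^ (2*n) * ((a ^ 2 + b ^ 2) ^ n * Real.exp (-c ^ 2)) by
        rw [mul_pow]; ring]
      rw [inv_mul_cancel₀ hx', one_pow, one_mul]
  rw [key, integral_prod_mul g (fun r : Ioi (0:ℝ) => h (r : ℝ)), integral_volumeIoiPow]
  congr 1
  have : ∀ r : ℝ, r ^ (m-1) * (r ^ (2*n) * Real.exp (-r ^ 2))
      = r ^ (2*n + (m-1)) * Real.exp (-r ^ 2) := fun r => by rw [pow_add]; ring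
  simp_rw [hh, this]
  rw [moment]
  congr 2
  push_cast [Nat.cast_sub (by omega : 1 ≤ m)]
  ring

lemma twoD (n : ℕ) :
    ∫ p : ℝ × ℝ, (p.1 ^ 2 + p.2 ^ 2) ^ n * Real.exp (-(p.1 ^ 2 + p.2 ^ 2))
      = Real.pi * Real.Gamma (n + 1) := by
  rw [← integral_comp_polarCoord_symm
      (fun p : ℝ × ℝ => (p.1 ^ 2 + p.2 ^ 2) ^ n * Real.exp (-(p.1 ^ 2 + p.2 ^ 2)))]
  have hcong : ∀ p ∈ polarCoord.target,
      p.1 • ((fun p : ℝ × ℝ => (p.1 ^ 2 + p.2 ^ 2) ^ n * Real.exp (-(p.1 ^ 2 + p.2 ^ 2)))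
          (polarCoord.symm p))
      = (fun r : ℝ => r ^ (2*n+1) * Real.exp (-r ^ 2)) p.1 * (fun _ : ℝ => (1:ℝ)) p.2 := by
    intro p _
    have hpt : (polarCoord.symm p).1 ^ 2 + (polarCoord.symm p).2 ^ 2 = p.1 ^ 2 := by
      rw [polarCoord_symm_apply]
      simp only
      rw [mul_pow, mul_pow, ← mul_add, add_comm ((Real.cos p.2)^2), Real.sin_sq_add_cos_sq,
        mul_one]
    simp only [hpt, smul_eq_mul, mul_one, ← pow_mul]
    ring
  rw [setIntegral_congr_fun (polarCoord.open_target.measurableSet) hcong, polarCoord_target,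
    Measure.volume_eq_prod,
    setIntegral_prod_mul (fun r : ℝ => r ^ (2*n+1) * Real.exp (-r^2)) (fun _ : ℝ => (1:ℝ)),
    moment]
  rw [setIntegral_const, smul_eq_mul, measureReal_def, Real.volume_Ioo, mul_one]
  rw [ENNReal.toReal_ofReal (by have := Real.pi_pos; linarith : (0:ℝ) ≤ Real.pi - -Real.pi)]
  have : ((2*n+1 : ℕ) + 1 : ℝ) / 2 = (n : ℝ) + 1 := by push_cast; ring
  rw [this]
  ring


lemma pairR_eq_inner {m : ℕ} (x y : V m) : pairR x y = inner ℝ x y := by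
  simp [pairR, PiLp.inner_apply, RCLike.inner_apply, mul_comm]

lemma gauss_eq {m' : ℕ} (u s : V (m'+2)) (hu : ‖u‖ = 1) (hs : ‖s‖ = 1)
    (hus : pairR u s = 0) (n : ℕ) :
    ∫ x : V (m'+2), (pairR x u ^ 2 + pairR x s ^ 2) ^ n * Real.exp (-‖x‖ ^ 2)
      = Real.pi * Real.Gamma (n + 1) * Real.sqrt Real.pi ^ m' := by
  classical
  -- orthonormal basis with b 0 = u, b 1 = s
  set v : Fin (m'+2) → V (m'+2) := fun i => if i = 0 then u else s with hv
  have h01 : (0 : Fin (m'+2)) ≠ 1 := by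
    intro h; exact absurd (congrArg Fin.val h) (by simp)
  have hortho : Orthonormal ℝ (Set.restrict ({0, 1} : Set (Fin (m'+2))) v) := by
    constructor
    · rintro ⟨i, hi⟩
      show ‖v i‖ = 1
      rcases hi with rfl | rfl <;> simp [v, hu, hs, h01]
    · rintro ⟨i, hi⟩ ⟨j, hj⟩ hij
      have hij' : i ≠ j := fun h => hij (by simpa using h)
      show inner ℝ (v i) (v j) = 0
      rcases hi with rfl | rfl <;> rcases hj with rfl | rfl <;>
        simp_all [v, ← pairR_eq_inner, hus, pairR]
      · rw [show ∑ j, s j * u j = pairR u s from Finset.sum_congr rfl fun j _ => mul_comm _ _]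
        exact hus
  obtain ⟨b, hb⟩ := hortho.exists_orthonormalBasis_extension_of_card_eq
    (by simp [finrank_euclideanSpace_fin])
  have hb0 : b 0 = u := by
    have := hb 0 (by simp); simpa [v] using this
  have hb1 : b 1 = s := by
    have := hb 1 (by simp); simpa [v, h01.symm] using this
  -- coordinates via the basis
  have hrepr0 : ∀ y : EuclideanSpace ℝ (Fin (m'+2)), pairR (b.repr.symm y) u = y 0 := by
    intro y
    rw [pairR_eq_inner, ← hb0, real_inner_comm, ← b.repr_apply_apply,
      LinearIsometryEquiv.apply_symm_apply]
  have hrepr1 : ∀ y : EuclideanSpace ℝ (Fin (m'+2)), pairR (b.repr.symm y) s = y 1 := by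
    intro y
    rw [pairR_eq_inner, ← hb1, real_inner_comm, ← b.repr_apply_apply,
      LinearIsometryEquiv.apply_symm_apply]
  have hA : ∫ x : V (m'+2), (pairR x u ^ 2 + pairR x s ^ 2) ^ n * Real.exp (-‖x‖ ^ 2)
      = ∫ y : EuclideanSpace ℝ (Fin (m'+2)), ((y 0) ^ 2 + (y 1) ^ 2) ^ n
          * Real.exp (-‖y‖ ^ 2) := by
    rw [← (b.measurePreserving_repr_symm).integral_comp
        (b.repr.symm.toHomeomorph.measurableEmbedding)
        (fun x : V (m'+2) => (pairR x u ^ 2 + pairR x s ^ 2) ^ n * Real.exp (-‖x‖ ^ 2))]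
    refine integral_congr_ae (.of_forall fun y => ?_)
    simp only [hrepr0 y, hrepr1 y, LinearIsometryEquiv.norm_map]
  set P : (Fin (m'+2) → ℝ) → ℝ :=
    fun z => ((z 0) ^ 2 + (z 1) ^ 2) ^ n * Real.exp (-∑ i, (z i) ^ 2) with hP
  have hB : ∫ y : EuclideanSpace ℝ (Fin (m'+2)), ((y 0) ^ 2 + (y 1) ^ 2) ^ n
        * Real.exp (-‖y‖ ^ 2)
      = ∫ z : Fin (m'+2) → ℝ, P z := by
    rw [← (EuclideanSpace.volume_preserving_symm_measurableEquiv_toLp (Fin (m'+2))).integral_comp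
        (MeasurableEquiv.measurableEmbedding _) P]
    refine integral_congr_ae (.of_forall fun y => ?_)
    have hn : ‖y‖ ^ 2 = ∑ i, (y i) ^ 2 := by
      rw [EuclideanSpace.norm_eq,
        Real.sq_sqrt (Finset.sum_nonneg fun i _ => sq_nonneg _)]
      simp [sq_abs]
    simp only [hP, hn]
    rfl
  set G : ℝ × (Fin (m'+1) → ℝ) → ℝ :=
    fun p => (p.1 ^ 2 + (p.2 0) ^ 2) ^ n
      * Real.exp (-(p.1 ^ 2 + ∑ i, (p.2 i) ^ 2)) with hG
  have hC : ∫ z : Fin (m'+2) → ℝ, P z = ∫ p, G p := by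
    rw [← (MeasureTheory.volume_preserving_piFinSuccAbove (fun _ : Fin (m'+2) => ℝ) 0).integral_comp
        (MeasurableEquiv.measurableEmbedding _) G]
    refine integral_congr_ae (.of_forall fun z => ?_)
    simp only [hP, hG, MeasurableEquiv.piFinSuccAbove_apply, Fin.insertNthEquiv_symm_apply,
      Fin.removeNth, Fin.succAbove_zero, Fin.sum_univ_succ (f := fun i => z i ^ 2),
      Fin.succ_zero_eq_one]
  set G2 : ℝ × (ℝ × (Fin m' → ℝ)) → ℝ :=
    fun p => (p.1 ^ 2 + p.2.1 ^ 2) ^ n * Real.exp (-(p.1 ^ 2 + p.2.1 ^ 2))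
      * Real.exp (-∑ i, (p.2.2 i) ^ 2) with hG2
  set e2 := MeasurableEquiv.piFinSuccAbove (fun _ : Fin (m'+1) => ℝ) 0 with he2
  have hee : MeasurePreserving (Prod.map (id : ℝ → ℝ) (⇑e2))
      ((volume : Measure ℝ).prod (volume : Measure (Fin (m'+1) → ℝ)))
      ((volume : Measure ℝ).prod (volume : Measure (ℝ × (Fin m' → ℝ)))) :=
    (MeasurePreserving.id volume).prod
      (MeasureTheory.volume_preserving_piFinSuccAbove (fun _ : Fin (m'+1) => ℝ) 0)
  have hemb : MeasurableEmbedding (Prod.map (id : ℝ → ℝ) (⇑e2)) :=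
    (MeasurableEmbedding.id).prodMap e2.measurableEmbedding
  have hD : ∫ p, G p = ∫ q, G2 q ∂((volume : Measure ℝ).prod
      (volume : Measure (ℝ × (Fin m' → ℝ)))) := by
    rw [Measure.volume_eq_prod, ← hee.integral_comp hemb G2]
    refine integral_congr_ae (.of_forall fun p => ?_)
    simp only [hG, hG2, he2, MeasurableEquiv.piFinSuccAbove_apply,
      Fin.insertNthEquiv_symm_apply, Fin.removeNth, Fin.succAbove_zero,
      Fin.sum_univ_succ (f := fun i => p.2 i ^ 2), Prod.map_fst, Prod.map_snd, id_eq]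
    rw [mul_assoc, ← Real.exp_add]
    ring_nf
  have hassoc := (MeasureTheory.measurePreserving_prodAssoc (volume : Measure ℝ)
    (volume : Measure ℝ) (volume : Measure (Fin m' → ℝ)))
  have hE : ∫ q, G2 q ∂((volume : Measure ℝ).prod
        (volume : Measure (ℝ × (Fin m' → ℝ))))
      = (∫ w : ℝ × ℝ, (w.1 ^ 2 + w.2 ^ 2) ^ n * Real.exp (-(w.1 ^ 2 + w.2 ^ 2)))
        * ∫ y : Fin m' → ℝ, Real.exp (-∑ i, (y i) ^ 2) := by
    rw [show (volume : Measure (ℝ × (Fin m' → ℝ)))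
        = (volume : Measure ℝ).prod (volume : Measure (Fin m' → ℝ)) from
      Measure.volume_eq_prod _ _]
    rw [← hassoc.integral_comp MeasurableEquiv.prodAssoc.measurableEmbedding G2]
    rw [show (fun w => G2 (MeasurableEquiv.prodAssoc w))
        = fun w : (ℝ × ℝ) × (Fin m' → ℝ) =>
            (fun v : ℝ × ℝ => (v.1 ^ 2 + v.2 ^ 2) ^ n * Real.exp (-(v.1 ^ 2 + v.2 ^ 2))) w.1
            * (fun y : Fin m' → ℝ => Real.exp (-∑ i, (y i) ^ 2)) w.2 from rfl]
    rw [integral_prod_mul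
      (fun v : ℝ × ℝ => (v.1 ^ 2 + v.2 ^ 2) ^ n * Real.exp (-(v.1 ^ 2 + v.2 ^ 2)))
      (fun y : Fin m' → ℝ => Real.exp (-∑ i, (y i) ^ 2))]
    rw [← Measure.volume_eq_prod]
  have hF : ∫ y : Fin m' → ℝ, Real.exp (-∑ i, (y i) ^ 2) = Real.sqrt Real.pi ^ m' := by
    have hys : ∀ y : Fin m' → ℝ, Real.exp (-∑ i, (y i) ^ 2)
        = ∏ i, Real.exp (-(y i) ^ 2) := by
      intro y
      rw [← Real.exp_sum, ← Finset.sum_neg_distrib]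
    simp_rw [hys]
    rw [MeasureTheory.volume_pi, MeasureTheory.integral_fintype_prod_eq_pow (ι := Fin m') (fun t : ℝ => Real.exp (-t ^ 2)),
      Fintype.card_fin]
    congr 1
    simpa using integral_gaussian 1
  rw [hA, hB, hC, hD, hE, hF, twoD]

end Aux

/-- Proposition 3.1, norms of the functions `f_{τ,k,ℓ}`. -/
theorem stmt4 (m : ℕ) (hm : 3 ≤ m)
    (u s : sphere (0 : V m) 1) (hus : pairR (u : V m) (s : V m) = 0) (k l : ℕ) :
    (∫ ω : sphere (0 : V m) 1,
      (∫ θ in (0:ℝ)..Real.pi,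
        (starRingEnd ℂ)
            (pairC (lvec θ ω) (tauP (u : V m) (s : V m)) ^ k * pairC (lvec θ ω) (tauM (u : V m) (s : V m)) ^ l) *
          (pairC (lvec θ ω) (tauP (u : V m) (s : V m)) ^ k * pairC (lvec θ ω) (tauM (u : V m) (s : V m)) ^ l))
      ∂(sphMeasure m)) =
    ((2 * Real.pi ^ ((m : ℝ) / 2 + 1) *
        (Real.Gamma ((k : ℝ) + l + 1) / Real.Gamma ((k : ℝ) + l + (m : ℝ) / 2)) : ℝ) : ℂ) := by
  obtain ⟨m', rfl⟩ : ∃ m', m = m' + 2 := ⟨m - 2, by omega⟩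
  set n := k + l with hn
  have hu : ‖(u : V (m' + 2))‖ = 1 := by
    simpa using mem_sphere_zero_iff_norm.1 u.2
  have hs : ‖(s : V (m' + 2))‖ = 1 := by
    simpa using mem_sphere_zero_iff_norm.1 s.2
  -- the inner integral is constant in θ
  have h1 : ∀ ω : sphere (0 : V (m' + 2)) 1,
      (∫ θ in (0:ℝ)..Real.pi,
        (starRingEnd ℂ)
            (pairC (lvec θ ω) (tauP (u : V (m'+2)) (s : V (m'+2))) ^ k *
              pairC (lvec θ ω) (tauM (u : V (m'+2)) (s : V (m'+2))) ^ l) *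
          (pairC (lvec θ ω) (tauP (u : V (m'+2)) (s : V (m'+2))) ^ k *
            pairC (lvec θ ω) (tauM (u : V (m'+2)) (s : V (m'+2))) ^ l))
      = Real.pi •
          (((pairR (ω : V (m'+2)) (u : V (m'+2)) ^ 2
            + pairR (ω : V (m'+2)) (s : V (m'+2)) ^ 2) ^ n : ℝ) : ℂ) := by
    intro ω
    rw [intervalIntegral.integral_congr
      (g := fun _ : ℝ => (((pairR (ω : V (m'+2)) (u : V (m'+2)) ^ 2
            + pairR (ω : V (m'+2)) (s : V (m'+2)) ^ 2) ^ n : ℝ) : ℂ))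
      (fun θ _ => conj_mul_self_eq (u : V (m'+2)) (s : V (m'+2)) θ (ω : V (m'+2)) k l)]
    rw [intervalIntegral.integral_const, sub_zero]
  rw [integral_congr_ae (Filter.Eventually.of_forall h1), integral_smul,
    show (∫ ω : sphere (0 : V (m'+2)) 1,
        (((pairR (ω : V (m'+2)) (u : V (m'+2)) ^ 2
          + pairR (ω : V (m'+2)) (s : V (m'+2)) ^ 2) ^ n : ℝ) : ℂ) ∂(sphMeasure (m'+2)))
      = ((∫ ω : sphere (0 : V (m'+2)) 1,
          (pairR (ω : V (m'+2)) (u : V (m'+2)) ^ 2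
            + pairR (ω : V (m'+2)) (s : V (m'+2)) ^ 2) ^ n ∂(sphMeasure (m'+2)) : ℝ) : ℂ)
      from integral_ofReal]
  -- the sphere integral
  set S := ∫ ω : sphere (0 : V (m'+2)) 1,
      (pairR (ω : V (m'+2)) (u : V (m'+2)) ^ 2
        + pairR (ω : V (m'+2)) (s : V (m'+2)) ^ 2) ^ n ∂(sphMeasure (m'+2)) with hS
  have hpolar := polar_eq (by omega : 3 ≤ m' + 2) (u : V (m'+2)) (s : V (m'+2)) n
  have hgauss := gauss_eq (u : V (m'+2)) (s : V (m'+2)) hu hs hus n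
  have hΓpos : 0 < Real.Gamma ((n : ℝ) + (((m' : ℕ) : ℝ) + 2) / 2) :=
    Real.Gamma_pos_of_pos (by positivity)
  have hSeq : S * ((1/2) * Real.Gamma ((n : ℝ) + (((m' : ℕ) : ℝ) + 2) / 2))
      = Real.pi * Real.Gamma ((n : ℝ) + 1) * Real.sqrt Real.pi ^ m' := by
    rw [← hgauss, hpolar, hS]
    norm_num
  have hsqrt : Real.sqrt Real.pi ^ m' = Real.pi ^ ((m' : ℝ) / 2) := by
    rw [Real.sqrt_eq_rpow, ← Real.rpow_natCast (Real.pi ^ ((1:ℝ)/2)) m',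
      ← Real.rpow_mul Real.pi_pos.le]
    congr 1
    ring
  have hpow : Real.pi ^ ((((m' : ℕ) : ℝ) + 2) / 2 + 1)
      = Real.pi ^ ((m' : ℝ) / 2) * Real.pi ^ 2 := by
    rw [show (((m' : ℕ) : ℝ) + 2) / 2 + 1 = (m' : ℝ) / 2 + ((2:ℕ) : ℝ) by push_cast; ring,
      Real.rpow_add Real.pi_pos, Real.rpow_natCast]
  -- final computation
  rw [Complex.real_smul, ← Complex.ofReal_mul]
  congr 1
  have hSval : S = Real.pi * Real.Gamma ((n : ℝ) + 1) * Real.sqrt Real.pi ^ m' * 2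
      / Real.Gamma ((n : ℝ) + (((m' : ℕ) : ℝ) + 2) / 2) := by
    rw [eq_div_iff hΓpos.ne']
    linarith [hSeq]
  rw [hSval, hsqrt]
  rw [show ((k : ℝ) + l + 1) = (n : ℝ) + 1 by rw [hn]; push_cast; ring]
  rw [show ((k : ℝ) + l + ((m' : ℕ) + 2 : ℕ) / 2) = (n : ℝ) + (((m' : ℕ) : ℝ) + 2) / 2 by
    rw [hn]; push_cast; ring]
  rw [show (((m' : ℕ) + 2 : ℕ) : ℝ) / 2 + 1 = ((((m' : ℕ) : ℝ)) + 2) / 2 + 1 by push_cast; ring]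
  rw [hpow]
  field_simp
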